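/- Let 1 < α ≤ 2, let M ≥ 2 be an integer, let h > 0, let C be the (M−1)×(M−1) Toeplitz matrix with entries C_{ij} = c_{i−j}^(α), and set D = h^{−α} C. Then there exists τ₀ > 0 such that for all 0 < τ < τ₀ and every vector b ∈ ℝ^{M−1}, the 3(M−1)×3(M−1) block matrix 𝒜 = [[I, −(τ/2)I, 0], [−(τ/2)D, I, (τ/2) diag(B(b))], [0, −(τ/2) diag(B(b)), 2I]], where diag(B(b)) is the diagonal matrix with entries B(b_j) = sin(b_j)/√(2 − cos(b_j)), is invertible. Consequently the linear IEQ-CN scheme is uniquely solvable for sufficiently small τ. -/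

import Mathlib

open scoped NNReal


/-- The fractional centered difference coefficients
`c_k^(α) = (−1)^k Γ(α+1) / (Γ(α/2 − k + 1) Γ(α/2 + k + 1))`,
interpreted as `0` when one of the Gamma arguments is a nonpositive integer. -/
noncomputable def fracCoeff (α : ℝ) (k : ℤ) : ℝ :=
  (-1 : ℝ) ^ k * Real.Gamma (α + 1) /
    (Real.Gamma (α / 2 - k + 1) * Real.Gamma (α / 2 + k + 1))

/-- `B(x) = sin x / √(2 − cos x)`. -/
noncomputable def Bfun (x : ℝ) : ℝ := Real.sin x / Real.sqrt (2 - Real.cos x)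

attribute [local instance] Matrix.linftyOpNormedRing Matrix.linftyOpNormedSpace

lemma norm_Bfun_le (x : ℝ) : ‖Bfun x‖ ≤ 1 := by
  have h1 : (1:ℝ) ≤ 2 - Real.cos x := by nlinarith [Real.cos_le_one x]
  have h2 : (1:ℝ) ≤ Real.sqrt (2 - Real.cos x) := by
    rw [show (1:ℝ) = Real.sqrt 1 by simp]
    exact Real.sqrt_le_sqrt h1
  have hs : |Real.sin x| ≤ 1 := Real.abs_sin_le_one x
  rw [Real.norm_eq_abs, Bfun, abs_div, abs_of_nonneg (Real.sqrt_nonneg _)]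
  rw [div_le_one (by linarith)]
  linarith

lemma matrix_norm_le_of_entries {n : Type*} [Fintype n] [DecidableEq n]
    [Nonempty n] (A : Matrix n n ℝ) {c : ℝ}
    (h : ∀ i j, ‖A i j‖ ≤ c) : ‖A‖ ≤ Fintype.card n * c := by
  have hc : 0 ≤ c :=
    le_trans (norm_nonneg _) (h (Classical.arbitrary n) (Classical.arbitrary n))
  rw [Matrix.linfty_opNorm_def]
  set c' : ℝ≥0 := ⟨c, hc⟩ with hc'
  have key : (Finset.univ.sup fun i : n => ∑ j : n, ‖A i j‖₊) ≤ Fintype.card n • c' := by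
    apply Finset.sup_le
    intro (i : n) _
    calc ∑ j : n, ‖A i j‖₊ ≤ ∑ _j : n, c' :=
          Finset.sum_le_sum fun j _ => by
            rw [← NNReal.coe_le_coe]; exact h i j
      _ = Fintype.card n • c' := by
          rw [Finset.sum_const, Finset.card_univ]
  calc ((Finset.univ.sup fun i : n => ∑ j : n, ‖A i j‖₊ : ℝ≥0) : ℝ)
      ≤ ((Fintype.card n • c' : ℝ≥0) : ℝ) := by exact_mod_cast key
    _ = Fintype.card n * c := by
        rw [NNReal.coe_nsmul]; simp [hc']; rfl

set_option maxHeartbeats 1000000 in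
theorem stmt11 (α : ℝ) (hα1 : 1 < α) (hα2 : α ≤ 2) (M : ℕ) (hM : 2 ≤ M)
    (h : ℝ) (hh : 0 < h)
    (Cm : Matrix (Fin (M - 1)) (Fin (M - 1)) ℝ)
    (hC : ∀ i j, Cm i j = fracCoeff α ((i : ℤ) - (j : ℤ)))
    (D : Matrix (Fin (M - 1)) (Fin (M - 1)) ℝ) (hD : D = h ^ (-α) • Cm) :
    ∃ τ₀ : ℝ, 0 < τ₀ ∧ ∀ τ : ℝ, 0 < τ → τ < τ₀ → ∀ b : Fin (M - 1) → ℝ,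
      IsUnit
        (Matrix.fromBlocks
          (Matrix.fromBlocks 1 (-(τ / 2) • (1 : Matrix (Fin (M - 1)) (Fin (M - 1)) ℝ))
            (-(τ / 2) • D) 1)
          (Matrix.fromRows 0 ((τ / 2) • Matrix.diagonal (fun j => Bfun (b j))))
          (Matrix.fromCols 0 (-(τ / 2) • Matrix.diagonal (fun j => Bfun (b j))))
          ((2 : ℝ) • (1 : Matrix (Fin (M - 1)) (Fin (M - 1)) ℝ))) := by
  have hn : 0 < M - 1 := by omega
  haveI : Nonempty (Fin (M - 1)) := ⟨⟨0, hn⟩⟩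
  haveI : Nontrivial (Matrix ((Fin (M - 1) ⊕ Fin (M - 1)) ⊕ Fin (M - 1)) ((Fin (M - 1) ⊕ Fin (M - 1)) ⊕ Fin (M - 1)) ℝ) := by
    refine ⟨1, 0, fun hcon => ?_⟩
    have := congrFun (congrFun hcon (Classical.arbitrary _)) (Classical.arbitrary _)
    simp [Matrix.one_apply] at this
  set P : Matrix ((Fin (M - 1) ⊕ Fin (M - 1)) ⊕ Fin (M - 1)) ((Fin (M - 1) ⊕ Fin (M - 1)) ⊕ Fin (M - 1)) ℝ := Matrix.fromBlocks 1 0 0 ((2 : ℝ) • 1) with hP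
  have hPunit : IsUnit P := by
    have h1 : P * (Matrix.fromBlocks 1 0 0 ((2 : ℝ)⁻¹ • 1)) = 1 := by
      rw [hP, Matrix.fromBlocks_multiply]
      norm_num [Matrix.smul_mul, Matrix.mul_smul, smul_smul, Matrix.fromBlocks_one]
    have h2 : (Matrix.fromBlocks 1 0 0 ((2 : ℝ)⁻¹ • 1)) * P = 1 := by
      rw [hP, Matrix.fromBlocks_multiply]
      norm_num [Matrix.smul_mul, Matrix.mul_smul, smul_smul, Matrix.fromBlocks_one]
    exact ⟨⟨P, _, h1, h2⟩, rfl⟩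
  set u := hPunit.unit with hu
  have hrpos : 0 < ‖(↑u⁻¹ : Matrix ((Fin (M - 1) ⊕ Fin (M - 1)) ⊕ Fin (M - 1)) ((Fin (M - 1) ⊕ Fin (M - 1)) ⊕ Fin (M - 1)) ℝ)‖⁻¹ := inv_pos.mpr (Units.norm_pos u⁻¹)
  set r : ℝ := ‖(↑u⁻¹ : Matrix ((Fin (M - 1) ⊕ Fin (M - 1)) ⊕ Fin (M - 1)) ((Fin (M - 1) ⊕ Fin (M - 1)) ⊕ Fin (M - 1)) ℝ)‖⁻¹ with hr
  set c : ℝ := 1 + ∑ i, ∑ j, ‖D i j‖ with hcdef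
  have hsum_nonneg : (0:ℝ) ≤ ∑ i, ∑ j, ‖D i j‖ :=
    Finset.sum_nonneg fun i _ => Finset.sum_nonneg fun j _ => norm_nonneg _
  have hc1 : 1 ≤ c := by rw [hcdef]; linarith
  have hDc : ∀ i j, ‖D i j‖ ≤ c := by
    intro i j
    have h1 : ‖D i j‖ ≤ ∑ j', ‖D i j'‖ :=
      Finset.single_le_sum (fun j' _ => norm_nonneg _) (Finset.mem_univ j)
    have h2 : (∑ j', ‖D i j'‖) ≤ ∑ i', ∑ j', ‖D i' j'‖ :=
      Finset.single_le_sum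
        (fun i' _ => Finset.sum_nonneg fun j' _ => norm_nonneg _) (Finset.mem_univ i)
    rw [hcdef]; linarith
  set N : ℝ := (Fintype.card ((Fin (M - 1) ⊕ Fin (M - 1)) ⊕ Fin (M - 1)) : ℝ) with hN
  have hN0 : 0 ≤ N := by positivity
  have hden : (0:ℝ) < N * c + 1 := by nlinarith
  refine ⟨r / (N * c + 1), div_pos hrpos hden, ?_⟩
  intro τ hτ hττ b
  set A : Matrix ((Fin (M - 1) ⊕ Fin (M - 1)) ⊕ Fin (M - 1)) ((Fin (M - 1) ⊕ Fin (M - 1)) ⊕ Fin (M - 1)) ℝ :=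
    Matrix.fromBlocks
      (Matrix.fromBlocks 1 (-(τ / 2) • (1 : Matrix (Fin (M - 1)) (Fin (M - 1)) ℝ))
        (-(τ / 2) • D) 1)
      (Matrix.fromRows 0 ((τ / 2) • Matrix.diagonal (fun j => Bfun (b j))))
      (Matrix.fromCols 0 (-(τ / 2) • Matrix.diagonal (fun j => Bfun (b j))))
      ((2 : ℝ) • (1 : Matrix (Fin (M - 1)) (Fin (M - 1)) ℝ)) with hA
  have hentry : ∀ i j : (Fin (M - 1) ⊕ Fin (M - 1)) ⊕ Fin (M - 1), ‖(A - P) i j‖ ≤ τ / 2 * c := by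
    have hτc : 0 ≤ τ / 2 * c := by nlinarith
    have hn2 : ‖τ / 2‖ = τ / 2 := by
      rw [Real.norm_eq_abs]; exact abs_of_pos (by linarith)
    intro i j
    rcases i with (i | i) | i <;> rcases j with (j | j) | j <;>
      simp only [hA, hP, Matrix.sub_apply, Matrix.fromBlocks_apply₁₁,
        Matrix.fromBlocks_apply₁₂, Matrix.fromBlocks_apply₂₁, Matrix.fromBlocks_apply₂₂,
        Matrix.fromRows_apply_inl, Matrix.fromRows_apply_inr,
        Matrix.fromCols_apply_inl, Matrix.fromCols_apply_inr,
        Matrix.smul_apply, Matrix.zero_apply, Matrix.one_apply, Sum.inl.injEq,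
        Sum.inr.injEq, smul_eq_mul, sub_zero, zero_sub, sub_self, norm_zero,
        Matrix.diagonal_apply, reduceCtorEq, if_false, mul_zero, norm_neg] <;>
      (try split_ifs with hij) <;>
      (try simp only [mul_one, mul_zero, norm_zero, norm_neg, norm_mul]) <;>
      first
        | exact hτc
        | (rw [hn2]
           nlinarith [norm_Bfun_le (b i), norm_Bfun_le (b j), hDc i j,
             norm_nonneg (Bfun (b i)), norm_nonneg (Bfun (b j)), norm_nonneg (D i j)])
  have hnorm : ‖A - P‖ < r := by
    have h1 : ‖A - P‖ ≤ N * (τ / 2 * c) := by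
      have := matrix_norm_le_of_entries (A - P) hentry
      rw [hN]; exact this
    have h2 : τ * (N * c + 1) < r := (lt_div_iff₀ hden).mp hττ
    nlinarith
  have hAunit := (u.ofNearby A (by rw [hu, IsUnit.unit_spec]; exact hnorm)).isUnit
  simpa using hAunit
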